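/- Let S be a semigroup, b,c ∈ S¹ with b and c regular in S¹, and ρ, σ congruences on S. Then (ρ ∨ σ)_{b,c} = ρ_{b,c} ∨ σ_{b,c}. -/

import Mathlib

/-- Any product `x * ↑s * y` in `S¹ = WithOne S` with middle factor in `S` lies in `S`. -/
theorem exists_coe_eq {S : Type*} [Semigroup S] (x y : WithOne S) (s : S) :
    ∃ z : S, (z : WithOne S) = x * ↑s * y := by
  induction x using WithOne.recOneCoe with
  | one => induction y using WithOne.recOneCoe with
    | one => exact ⟨s, by simp⟩
    | coe b => exact ⟨s * b, by simp⟩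
  | coe a => induction y using WithOne.recOneCoe with
    | one => exact ⟨a * s, by simp⟩
    | coe b => exact ⟨a * s * b, by simp [mul_assoc]⟩

/-- The element `x s y ∈ S` for `x, y ∈ S¹`, `s ∈ S`. -/
noncomputable def sand3 {S : Type*} [Semigroup S] (x : WithOne S) (s : S) (y : WithOne S) : S :=
  (exists_coe_eq x y s).choose

theorem sand3_spec {S : Type*} [Semigroup S] (x : WithOne S) (s : S) (y : WithOne S) :
    (↑(sand3 x s y) : WithOne S) = x * ↑s * y :=
  (exists_coe_eq x y s).choose_spec

/-- `sand b c s = b s c ∈ S` for `b, c ∈ S¹`, `s ∈ S`. -/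
noncomputable def sand {S : Type*} [Semigroup S] (b c : WithOne S) (s : S) : S := sand3 b s c

/-- The join of two congruences: the transitive closure of their union. -/
def joinRel {S : Type*} (ρ σ : S → S → Prop) : S → S → Prop :=
  Relation.TransGen (fun x y => ρ x y ∨ σ x y)

theorem sand3_congr {S : Type*} [Semigroup S] {x y x' y' : WithOne S} {u u' : S}
    (h : x * ↑u * y = x' * ↑u' * y') : sand3 x u y = sand3 x' u' y' := by
  apply WithOne.coe_inj.mp
  rw [sand3_spec, sand3_spec, h]

theorem compat3 {S : Type*} [Semigroup S] (ρ : S → S → Prop)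
    (hrefl : ∀ s : S, ρ s s)
    (hcomp : ∀ s t u v : S, ρ s t → ρ u v → ρ (s * u) (t * v))
    (x y : WithOne S) {u v : S} (h : ρ u v) :
    ρ (sand3 x u y) (sand3 x v y) := by
  induction x using WithOne.recOneCoe with
  | one => induction y using WithOne.recOneCoe with
    | one =>
      have e1 : sand3 (1 : WithOne S) u 1 = u := WithOne.coe_inj.mp (by rw [sand3_spec]; simp)
      have e2 : sand3 (1 : WithOne S) v 1 = v := WithOne.coe_inj.mp (by rw [sand3_spec]; simp)
      rw [e1, e2]; exact h
    | coe d =>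
      have e1 : sand3 (1 : WithOne S) u ↑d = u * d := WithOne.coe_inj.mp (by rw [sand3_spec]; simp)
      have e2 : sand3 (1 : WithOne S) v ↑d = v * d := WithOne.coe_inj.mp (by rw [sand3_spec]; simp)
      rw [e1, e2]; exact hcomp _ _ _ _ h (hrefl d)
  | coe a => induction y using WithOne.recOneCoe with
    | one =>
      have e1 : sand3 (↑a) u 1 = a * u := WithOne.coe_inj.mp (by rw [sand3_spec]; simp)
      have e2 : sand3 (↑a) v 1 = a * v := WithOne.coe_inj.mp (by rw [sand3_spec]; simp)
      rw [e1, e2]; exact hcomp _ _ _ _ (hrefl a) h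
    | coe d =>
      have e1 : sand3 (↑a) u ↑d = a * u * d := WithOne.coe_inj.mp (by rw [sand3_spec]; simp)
      have e2 : sand3 (↑a) v ↑d = a * v * d := WithOne.coe_inj.mp (by rw [sand3_spec]; simp)
      rw [e1, e2]; exact hcomp _ _ _ _ (hcomp _ _ _ _ (hrefl a) h) (hrefl d)

/-- If `b` and `c` are regular in `S¹`, then `(ρ ∨ σ)_{b,c} = ρ_{b,c} ∨ σ_{b,c}` for all
congruences `ρ, σ` on `S`. -/
theorem rho_bc_join_eq_of_regular {S : Type*} [Semigroup S]
    (b c : WithOne S)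
    (hb : ∃ b' : WithOne S, b * b' * b = b)
    (hc : ∃ c' : WithOne S, c * c' * c = c)
    (ρ σ : S → S → Prop)
    (hρequiv : Equivalence ρ)
    (hρcomp : ∀ s t u v : S, ρ s t → ρ u v → ρ (s * u) (t * v))
    (hσequiv : Equivalence σ)
    (hσcomp : ∀ s t u v : S, σ s t → σ u v → σ (s * u) (t * v)) :
    ∀ s t : S,
      joinRel ρ σ (sand b c s) (sand b c t) ↔
        joinRel (fun x y : S => ρ (sand b c x) (sand b c y))
          (fun x y : S => σ (sand b c x) (sand b c y)) s t := by
  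
  intro s t
  obtain ⟨b', hb'⟩ := hb
  obtain ⟨c', hc'⟩ := hc
  have key : ∀ u : S, sand b c (sand3 b' u c') = sand3 (b * b') u (c' * c) := by
    intro u
    apply sand3_congr
    rw [sand3_spec]
    simp [mul_assoc]
  have fix : ∀ u : S, sand b c (sand3 b' (sand b c u) c') = sand b c u := by
    intro u
    apply sand3_congr
    calc b * ↑(sand3 b' (sand3 b u c) c') * c
        = (b * b' * b) * ↑u * (c * c' * c) := by rw [sand3_spec, sand3_spec]; simp [mul_assoc]
      _ = b * ↑u * c := by rw [hb', hc']
  constructor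
  · intro h
    have aux : ∀ u v : S, joinRel ρ σ u v →
        joinRel (fun x y : S => ρ (sand b c x) (sand b c y))
          (fun x y : S => σ (sand b c x) (sand b c y)) (sand3 b' u c') (sand3 b' v c') := by
      intro u v huv
      induction huv with
      | single h1 =>
        apply Relation.TransGen.single
        rcases h1 with h1 | h1
        · left; simp only [key]; exact compat3 ρ hρequiv.refl hρcomp _ _ h1
        · right; simp only [key]; exact compat3 σ hσequiv.refl hσcomp _ _ h1
      | tail _ h2 ih =>
        refine ih.tail ?_
        rcases h2 with h2 | h2
        · left; simp only [key]; exact compat3 ρ hρequiv.refl hρcomp _ _ h2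
        · right; simp only [key]; exact compat3 σ hσequiv.refl hσcomp _ _ h2
    have h' := aux _ _ h
    refine Relation.TransGen.head ?_ (h'.tail ?_)
    · left; simp only [fix]; exact hρequiv.refl _
    · left; simp only [fix]; exact hρequiv.refl _
  · intro h
    induction h with
    | single h1 => exact Relation.TransGen.single h1
    | tail _ h2 ih => exact ih.tail h2
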